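/- Let m < n be positive integers. Write a^l_i, b^l_i for the distinguished basis of M_l. There is a kV₄-module homomorphism ζ : M_m → M_n with ζ(a^m_i) = a^n_{n−m+i} and ζ(b^m_i) = b^n_{n−m+i} for 1 ≤ i ≤ m, and a kV₄-module homomorphism ξ : M_n → M_{n−m} with ξ(a^n_i) = a^{n−m}_i and ξ(b^n_i) = b^{n−m}_i for 1 ≤ i ≤ n−m, and ξ(a^n_i) = ξ(b^n_i) = 0 for n−m < i ≤ n. The sequence 0 → M_m → M_n → M_{n−m} → 0 given by ζ and ξ is exact: ζ is injective, ξ is surjective, and range ζ = ker ξ. Moreover ζ is not a split monomorphism and ξ is not a split epimorphism. -/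

import Mathlib

universe u v w

/-- A homomorphism of `A`-modules factors through a projective `A`-module. -/
def FactorsThroughProjective {A : Type u} [Ring A] {M : Type v} {N : Type w}
    [AddCommGroup M] [Module A M] [AddCommGroup N] [Module A N]
    (φ : M →ₗ[A] N) : Prop :=
  ∃ (Q : ModuleCat.{max u v w} A) (f : M →ₗ[A] Q) (g : Q →ₗ[A] N),
    Module.Projective A Q ∧ g ∘ₗ f = φ

/-- The Klein four group. -/
abbrev V4 : Type := Multiplicative (ZMod 2 × ZMod 2)

/-- The first generator `s` of the Klein four group. -/
def sV4 : V4 := Multiplicative.ofAdd (1, 0)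

/-- The second generator `t` of the Klein four group. -/
def tV4 : V4 := Multiplicative.ofAdd (0, 1)

/-- `B` is a `k`-basis `a_1,…,a_n,b_1,…,b_n` of the `kV₄`-module `M` on which
`x = s - 1` and `y = t - 1` act by `x·a_i = b_i`, `y·a_i = b_{i+1}` (`i < n`),
`y·a_n = 0`, `x·b_i = y·b_i = 0`; i.e. `M` is the module `M_n`. -/
def IsKleinModuleBasis (k : Type) [Field k] (n : ℕ) (M : Type) [AddCommGroup M]
    [Module k M] [Module (MonoidAlgebra k V4) M]
    [IsScalarTower k (MonoidAlgebra k V4) M]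
    (B : Module.Basis (Fin n ⊕ Fin n) k M) : Prop :=
  (∀ i : Fin n, (MonoidAlgebra.of k V4 sV4 - 1) • B (Sum.inl i) = B (Sum.inr i)) ∧
  (∀ (i : Fin n) (h : (i : ℕ) + 1 < n),
      (MonoidAlgebra.of k V4 tV4 - 1) • B (Sum.inl i) = B (Sum.inr ⟨(i : ℕ) + 1, h⟩)) ∧
  (∀ i : Fin n, (i : ℕ) + 1 = n → (MonoidAlgebra.of k V4 tV4 - 1) • B (Sum.inl i) = 0) ∧
  (∀ i : Fin n, (MonoidAlgebra.of k V4 sV4 - 1) • B (Sum.inr i) = 0) ∧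
  (∀ i : Fin n, (MonoidAlgebra.of k V4 tV4 - 1) • B (Sum.inr i) = 0)

/-- Scalar multiplication by a fixed element of the group algebra, as a `k`-linear map. -/
noncomputable def smulMapK (k : Type) [Field k] {M : Type} [AddCommGroup M]
    [Module k M] [Module (MonoidAlgebra k V4) M]
    [IsScalarTower k (MonoidAlgebra k V4) M] (a : MonoidAlgebra k V4) : M →ₗ[k] M where
  toFun v := a • v
  map_add' u v := smul_add a u v
  map_smul' c v := smul_comm a c v

@[simp] lemma smulMapK_apply (k : Type) [Field k] {M : Type} [AddCommGroup M]
    [Module k M] [Module (MonoidAlgebra k V4) M]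
    [IsScalarTower k (MonoidAlgebra k V4) M] (a : MonoidAlgebra k V4) (v : M) :
    smulMapK k a v = a • v := rfl

/-- The maps `ζ : M_m → M_n` and `ξ : M_n → M_{n-m}` form a short exact
sequence `0 → M_m → M_n → M_{n-m} → 0`; moreover `ζ` is not a split
monomorphism and `ξ` is not a split epimorphism. -/
theorem stmt12 (k : Type) [Field k] [IsAlgClosed k] [CharP k 2]
    (m n : ℕ) (hm : 0 < m) (hmn : m < n)
    (M₁ : Type) [AddCommGroup M₁] [Module k M₁] [Module (MonoidAlgebra k V4) M₁]
    [IsScalarTower k (MonoidAlgebra k V4) M₁]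
    (M₂ : Type) [AddCommGroup M₂] [Module k M₂] [Module (MonoidAlgebra k V4) M₂]
    [IsScalarTower k (MonoidAlgebra k V4) M₂]
    (M₃ : Type) [AddCommGroup M₃] [Module k M₃] [Module (MonoidAlgebra k V4) M₃]
    [IsScalarTower k (MonoidAlgebra k V4) M₃]
    (B₁ : Module.Basis (Fin m ⊕ Fin m) k M₁) (hB₁ : IsKleinModuleBasis k m M₁ B₁)
    (B₂ : Module.Basis (Fin n ⊕ Fin n) k M₂) (hB₂ : IsKleinModuleBasis k n M₂ B₂)
    (B₃ : Module.Basis (Fin (n - m) ⊕ Fin (n - m)) k M₃)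
    (hB₃ : IsKleinModuleBasis k (n - m) M₃ B₃)
    (ζ : M₁ →ₗ[MonoidAlgebra k V4] M₂)
    (hζa : ∀ i : Fin m, ζ (B₁ (Sum.inl i)) = B₂ (Sum.inl ⟨n - m + (i : ℕ), by omega⟩))
    (hζb : ∀ i : Fin m, ζ (B₁ (Sum.inr i)) = B₂ (Sum.inr ⟨n - m + (i : ℕ), by omega⟩))
    (ξ : M₂ →ₗ[MonoidAlgebra k V4] M₃)
    (hξa : ∀ (i : Fin n) (h : (i : ℕ) < n - m), ξ (B₂ (Sum.inl i)) = B₃ (Sum.inl ⟨(i : ℕ), h⟩))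
    (hξa0 : ∀ i : Fin n, n - m ≤ (i : ℕ) → ξ (B₂ (Sum.inl i)) = 0)
    (hξb : ∀ (i : Fin n) (h : (i : ℕ) < n - m), ξ (B₂ (Sum.inr i)) = B₃ (Sum.inr ⟨(i : ℕ), h⟩))
    (hξb0 : ∀ i : Fin n, n - m ≤ (i : ℕ) → ξ (B₂ (Sum.inr i)) = 0) :
    Function.Injective ζ ∧ Function.Surjective ξ ∧
      LinearMap.range ζ = LinearMap.ker ξ ∧
      ¬ (∃ r : M₂ →ₗ[MonoidAlgebra k V4] M₁, r ∘ₗ ζ = LinearMap.id) ∧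
      ¬ (∃ σ : M₃ →ₗ[MonoidAlgebra k V4] M₂, ξ ∘ₗ σ = LinearMap.id) := by
  classical
  obtain ⟨hB₁x, hB₁y, hB₁y0, hB₁xb, hB₁yb⟩ := hB₁
  obtain ⟨hB₂x, hB₂y, hB₂y0, hB₂xb, hB₂yb⟩ := hB₂
  obtain ⟨hB₃x, hB₃y, hB₃y0, hB₃xb, hB₃yb⟩ := hB₃
  set x : MonoidAlgebra k V4 := MonoidAlgebra.of k V4 sV4 - 1 with hxdef
  set y : MonoidAlgebra k V4 := MonoidAlgebra.of k V4 tV4 - 1 with hydef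
  haveI : Module.Finite k M₁ := Module.Finite.of_basis B₁
  haveI : Module.Finite k M₂ := Module.Finite.of_basis B₂
  haveI : Module.Finite k M₃ := Module.Finite.of_basis B₃
  set ζk : M₁ →ₗ[k] M₂ := ζ.restrictScalars k with hζkdef
  set ξk : M₂ →ₗ[k] M₃ := ξ.restrictScalars k with hξkdef
  -- the index map
  set f : Fin m ⊕ Fin m → Fin n ⊕ Fin n :=
    Sum.map (fun i : Fin m => (⟨n - m + (i : ℕ), by omega⟩ : Fin n))
      (fun i : Fin m => (⟨n - m + (i : ℕ), by omega⟩ : Fin n)) with hfdef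
  have hfinj : Function.Injective f := by
    have h1 : Function.Injective
        (fun i : Fin m => (⟨n - m + (i : ℕ), by omega⟩ : Fin n)) := by
      intro i j hij
      have := congrArg Fin.val hij
      simp only [Fin.val_mk] at this
      exact Fin.ext (by omega)
    exact Function.Injective.sumMap h1 h1
  have hζB : ∀ e, ζ (B₁ e) = B₂ (f e) := by
    rintro (i | i)
    · exact hζa i
    · exact hζb i
  -- injectivity of ζ
  have hinj : Function.Injective ζ := by
    have hli : LinearIndependent k (fun e => B₂ (f e)) :=
      B₂.linearIndependent.comp f hfinj
    intro u w huw
    set d := u - w with hddef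
    have h0 : ζk d = 0 := by
      simp only [hζkdef, LinearMap.restrictScalars_apply, hddef, map_sub, huw, sub_self]
    have hd : ∑ e, B₁.repr d e • B₂ (f e) = 0 := by
      calc ∑ e, B₁.repr d e • B₂ (f e)
          = ∑ e, B₁.repr d e • ζk (B₁ e) := by
            refine Finset.sum_congr rfl fun e _ => ?_
            rw [hζkdef, LinearMap.restrictScalars_apply, hζB]
        _ = ζk (∑ e, B₁.repr d e • B₁ e) := by rw [map_sum]; simp
        _ = ζk d := by rw [B₁.sum_repr]
        _ = 0 := h0
    have hcoef := Fintype.linearIndependent_iff.mp hli _ hd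
    have hd0 : d = 0 := by
      rw [← B₁.sum_repr d]
      simp only [hcoef, zero_smul, Finset.sum_const_zero]
    have := sub_eq_zero.mp (hddef ▸ hd0)
    exact this
  -- surjectivity of ξ
  have hsurjk : Function.Surjective ξk := by
    rw [← LinearMap.range_eq_top]
    rw [eq_top_iff, ← B₃.span_eq, Submodule.span_le]
    rintro _ ⟨e, rfl⟩
    rcases e with i | i
    · refine ⟨B₂ (Sum.inl ⟨(i : ℕ), by omega⟩), ?_⟩
      simp only [hξkdef, LinearMap.restrictScalars_apply]
      have := hξa ⟨(i : ℕ), by omega⟩ (by exact i.2)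
      simpa using this
    · refine ⟨B₂ (Sum.inr ⟨(i : ℕ), by omega⟩), ?_⟩
      simp only [hξkdef, LinearMap.restrictScalars_apply]
      have := hξb ⟨(i : ℕ), by omega⟩ (by exact i.2)
      simpa using this
  have hsurj : Function.Surjective ξ := hsurjk
  -- ξ ∘ ζ = 0
  have hζξ : ∀ v : M₁, ξ (ζ v) = 0 := by
    have hcomp : (ξk.comp ζk) = 0 := by
      apply B₁.ext
      rintro (i | i)
      · simp only [LinearMap.comp_apply, hζkdef, hξkdef, LinearMap.restrictScalars_apply,
          hζa, LinearMap.zero_apply]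
        exact hξa0 _ (by simp)
      · simp only [LinearMap.comp_apply, hζkdef, hξkdef, LinearMap.restrictScalars_apply,
          hζb, LinearMap.zero_apply]
        exact hξb0 _ (by simp)
    intro v
    have := DFunLike.congr_fun hcomp v
    simpa [hζkdef, hξkdef] using this
  -- dimension count for exactness
  have hfr1 : Module.finrank k M₁ = m + m := by
    rw [Module.finrank_eq_card_basis B₁]; simp
  have hfr2 : Module.finrank k M₂ = n + n := by
    rw [Module.finrank_eq_card_basis B₂]; simp
  have hfr3 : Module.finrank k M₃ = (n - m) + (n - m) := by
    rw [Module.finrank_eq_card_basis B₃]; simp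
  have hle : LinearMap.range ζk ≤ LinearMap.ker ξk := by
    rintro _ ⟨w, rfl⟩
    simp only [LinearMap.mem_ker, hζkdef, hξkdef, LinearMap.restrictScalars_apply]
    exact hζξ w
  have hrange : Module.finrank k (LinearMap.range ζk) = m + m := by
    rw [LinearMap.finrank_range_of_inj (by simpa [hζkdef] using hinj), hfr1]
  have hker : Module.finrank k (LinearMap.ker ξk) = m + m := by
    have hrn := LinearMap.finrank_range_add_finrank_ker ξk
    have htop : LinearMap.range ξk = ⊤ := LinearMap.range_eq_top.mpr hsurjk
    rw [htop, finrank_top, hfr2, hfr3] at hrn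
    omega
  have heq : LinearMap.range ζk = LinearMap.ker ξk :=
    Submodule.eq_of_le_of_finrank_eq hle (by rw [hrange, hker])
  have hrk : LinearMap.range ζ = LinearMap.ker ξ := by
    ext v
    simp only [LinearMap.mem_range, LinearMap.mem_ker]
    constructor
    · rintro ⟨w, rfl⟩; exact hζξ w
    · intro h
      have hv : v ∈ LinearMap.ker ξk := by
        simpa [hξkdef] using h
      rw [← heq] at hv
      obtain ⟨w, hw⟩ := hv
      exact ⟨w, by simpa [hζkdef] using hw⟩
  refine ⟨hinj, hsurj, hrk, ?_, ?_⟩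
  -- ζ is not split mono
  · rintro ⟨r, hr⟩
    -- the coordinate of b₁ in y • v is always zero
    have hL1 : ∀ v : M₁, B₁.coord (Sum.inr ⟨0, hm⟩) (y • v) = 0 := by
      have hzero : (B₁.coord (Sum.inr ⟨0, hm⟩)).comp (smulMapK k y) = 0 := by
        apply B₁.ext
        rintro (i | i)
        · simp only [LinearMap.comp_apply, smulMapK_apply, LinearMap.zero_apply]
          by_cases h : (i : ℕ) + 1 < m
          · rw [hB₁y i h]
            rw [Module.Basis.coord_apply, Module.Basis.repr_self_apply]
            rw [if_neg]
            intro hcon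
            have := congrArg (fun e => Sum.elim Fin.val Fin.val e) hcon
            simp at this
          · rw [hB₁y0 i (by omega)]
            simp
        · simp only [LinearMap.comp_apply, smulMapK_apply, LinearMap.zero_apply]
          rw [hB₁yb i]
          simp
      intro v
      have := DFunLike.congr_fun hzero v
      simpa using this
    -- derive b₁ = y • (something)
    have hr' : ∀ w : M₁, r (ζ w) = w := fun w => by
      have := DFunLike.congr_fun hr w
      simpa using this
    have h2 : ζ (B₁ (Sum.inr ⟨0, hm⟩)) = B₂ (Sum.inr ⟨n - m, by omega⟩) := by
      rw [hζb ⟨0, hm⟩]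
      exact congrArg (fun j => B₂ (Sum.inr j)) (Fin.ext (show n - m + 0 = n - m by omega))
    have h3 : y • B₂ (Sum.inl ⟨n - m - 1, by omega⟩) = B₂ (Sum.inr ⟨n - m, by omega⟩) := by
      rw [hB₂y ⟨n - m - 1, by omega⟩ (show n - m - 1 + 1 < n by omega)]
      exact congrArg (fun j => B₂ (Sum.inr j)) (Fin.ext (show n - m - 1 + 1 = n - m by omega))
    have h4 : B₁ (Sum.inr ⟨0, hm⟩) = y • r (B₂ (Sum.inl ⟨n - m - 1, by omega⟩)) := by
      rw [← map_smul, h3, ← h2, hr']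
    have h5 := hL1 (r (B₂ (Sum.inl ⟨n - m - 1, by omega⟩)))
    rw [← h4, Module.Basis.coord_apply, Module.Basis.repr_self_apply, if_pos rfl] at h5
    exact one_ne_zero h5
  -- ξ is not split epi
  · rintro ⟨σ, hσ⟩
    have hσ' : ∀ w : M₃, ξ (σ w) = w := fun w => by
      have := DFunLike.congr_fun hσ w
      simpa using this
    -- key: if y • v = 0 then the inl-coordinates of v below n-1 vanish
    have hL2 : ∀ (v : M₂), y • v = 0 → ∀ (i : Fin n), (i : ℕ) + 1 < n →
        B₂.repr v (Sum.inl i) = 0 := by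
      intro v hv i hi
      have hco : (B₂.coord (Sum.inr ⟨(i : ℕ) + 1, hi⟩)).comp (smulMapK k y)
          = B₂.coord (Sum.inl i) := by
        apply B₂.ext
        rintro (j | j)
        · simp only [LinearMap.comp_apply, smulMapK_apply]
          by_cases h : (j : ℕ) + 1 < n
          · rw [hB₂y j h]
            rw [Module.Basis.coord_apply, Module.Basis.repr_self_apply,
              Module.Basis.coord_apply, Module.Basis.repr_self_apply]
            by_cases hij : j = i
            · subst hij; simp
            · rw [if_neg, if_neg]
              · simpa [eq_comm] using hij
              · intro hcon
                have := congrArg (fun e => Sum.elim Fin.val Fin.val e) hcon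
                simp at this
                exact hij (Fin.ext (by omega))
          · rw [hB₂y0 j (by omega)]
            rw [map_zero, Module.Basis.coord_apply, Module.Basis.repr_self_apply]
            rw [if_neg]
            intro hcon
            have := congrArg (fun e => Sum.elim Fin.val Fin.val e) hcon
            simp at this
            omega
        · simp only [LinearMap.comp_apply, smulMapK_apply]
          rw [hB₂yb j, map_zero, Module.Basis.coord_apply, Module.Basis.repr_self_apply, if_neg]
          simp
      have := DFunLike.congr_fun hco v
      simp only [LinearMap.comp_apply, smulMapK_apply, hv, map_zero] at this
      rw [Module.Basis.coord_apply] at this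
      exact this.symm
    have hya : y • B₃ (Sum.inl ⟨n - m - 1, by omega⟩) = 0 :=
      hB₃y0 ⟨n - m - 1, by omega⟩ (show n - m - 1 + 1 = n - m by omega)
    have hxa : x • B₃ (Sum.inl ⟨n - m - 1, by omega⟩) = B₃ (Sum.inr ⟨n - m - 1, by omega⟩) :=
      hB₃x _
    have hyv : y • σ (B₃ (Sum.inl ⟨n - m - 1, by omega⟩)) = 0 := by
      rw [← map_smul, hya, map_zero]
    have hxv0 : ∀ v : M₂, y • v = 0 → ξ (x • v) = 0 := by
      intro v hyv
      have hsum : x • v = ∑ e, B₂.repr v e • (x • B₂ e) := by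
        conv_lhs => rw [← B₂.sum_repr v]
        rw [Finset.smul_sum]
        exact Finset.sum_congr rfl fun e _ => smul_comm _ _ _
      rw [hsum, map_sum]
      refine Finset.sum_eq_zero fun e _ => ?_
      rw [LinearMap.map_smul_of_tower]
      rcases e with i | i
      · rw [hB₂x i]
        by_cases h : (i : ℕ) < n - m
        · rw [hL2 v hyv i (by omega), zero_smul]
        · rw [hξb0 i (by omega), smul_zero]
      · rw [hB₂xb i, map_zero, smul_zero]
    have hxv := hxv0 _ hyv
    have hcontra : ξ (x • σ (B₃ (Sum.inl ⟨n - m - 1, by omega⟩)))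
        = B₃ (Sum.inr ⟨n - m - 1, by omega⟩) := by
      rw [map_smul, hσ', hxa]
    rw [hxv] at hcontra
    exact B₃.ne_zero _ hcontra.symm
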